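/- (Cardinality reduction for the Wyner–Ziv strong converse exponent) For finite alphabets X, Y, Z and any joint distribution P_{ŨX̃ỸZ̃} on U×X×Y×Z with arbitrary finite U, there exists a joint distribution P_{Ũ'X̃ỸZ̃} on U'×X×Y×Z with |U'| ≤ |X||Y||Z| + 1 having the same marginal P_{X̃ỸZ̃}, the same value of I(Ũ ∧ Ỹ|X̃) + I(Z̃ ∧ X̃|Ũ,Ỹ), and the same value of I(Ũ ∧ X̃) − I(Ũ ∧ Ỹ). -/

import Mathlib

open Real Finset
open scoped Classical

noncomputable section

/-- Shannon entropy (base 2) of a pmf on a finite type. -/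
def ent {S : Type*} [Fintype S] (p : S → ℝ) : ℝ :=
  - ∑ s, p s * Real.logb 2 (p s)

/-- Pushforward pmf under a map. -/
def push {S T : Type*} [Fintype S] [Fintype T] (p : S → ℝ) (f : S → T) : T → ℝ :=
  fun t => ∑ s, if f s = t then p s else 0

/-- Entropy of the random variable `f` under joint pmf `p`. -/
def entOf {S T : Type*} [Fintype S] [Fintype T] (p : S → ℝ) (f : S → T) : ℝ :=
  ent (push p f)

/-- Conditional entropy `H(f | g)` under joint pmf `p`. -/
def condEnt {S T V : Type*} [Fintype S] [Fintype T] [Fintype V]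
    (p : S → ℝ) (f : S → T) (g : S → V) : ℝ :=
  entOf p (fun s => (f s, g s)) - entOf p g

/-- Mutual information `I(f ∧ g)` under joint pmf `p`. -/
def miOf {S T V : Type*} [Fintype S] [Fintype T] [Fintype V]
    (p : S → ℝ) (f : S → T) (g : S → V) : ℝ :=
  entOf p f + entOf p g - entOf p (fun s => (f s, g s))

/-- Conditional mutual information `I(f ∧ g | h)` under joint pmf `p`. -/
def cmiOf {S T V W : Type*} [Fintype S] [Fintype T] [Fintype V] [Fintype W]
    (p : S → ℝ) (f : S → T) (g : S → V) (h : S → W) : ℝ :=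
  condEnt p f h + condEnt p g h - condEnt p (fun s => (f s, g s)) h

/-- Kullback–Leibler divergence (base 2). -/
def kl {S : Type*} [Fintype S] (p q : S → ℝ) : ℝ :=
  ∑ s, p s * Real.logb 2 (p s / q s)

end


noncomputable section AuxWZ



variable {α β γ : Type*}

lemma sum_push [Fintype α] [Fintype β] (p : α → ℝ) (f : α → β) :
    ∑ t, push p f t = ∑ s, p s := by
  unfold push
  rw [Finset.sum_comm]
  refine Finset.sum_congr rfl fun s _ => ?_
  simp

lemma push_comp [Fintype α] [Fintype β] [Fintype γ] (p : α → ℝ) (f : α → β) (e : β → γ) :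
    push p (fun s => e (f s)) = push (push p f) e := by
  funext c
  unfold push
  refine Eq.symm ?_
  calc (∑ b, if e b = c then (∑ a, if f a = b then p a else 0) else 0)
      = ∑ b, ∑ a, (if e b = c then (if f a = b then p a else 0) else 0) := by
        refine Finset.sum_congr rfl fun b _ => ?_
        split_ifs with h
        · rfl
        · simp
    _ = ∑ a, ∑ b, (if e b = c then (if f a = b then p a else 0) else 0) := Finset.sum_comm
    _ = ∑ a, if e (f a) = c then p a else 0 := by
        refine Finset.sum_congr rfl fun a _ => ?_
        rw [Finset.sum_eq_single (f a)]
        · simp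
        · intro b _ hb
          simp [Ne.symm hb]
        · simp

lemma push_apply_inj [Fintype α] [Fintype β] (p : α → ℝ) {e : α → β}
    (he : Function.Injective e) (a : α) : push p e (e a) = p a := by
  unfold push
  rw [Finset.sum_eq_single a]
  · simp
  · intro b _ hb
    simp only [ite_eq_right_iff]
    intro h; exact absurd (he h) hb
  · simp

lemma ent_push_inj [Fintype α] [Fintype β] (p : α → ℝ) {e : α → β}
    (he : Function.Injective e) : ent (push p e) = ent p := by
  unfold ent
  congr 1
  rw [show (Finset.univ : Finset β) = Finset.univ from rfl,
    ← Finset.sum_subset (Finset.subset_univ (Finset.univ.image e))]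
  · rw [Finset.sum_image (fun a _ b _ h => he h)]
    refine Finset.sum_congr rfl fun a _ => ?_
    rw [push_apply_inj p he]
  · intro c _ hc
    have hz : push p e c = 0 := by
      unfold push
      refine Finset.sum_eq_zero fun a _ => ?_
      have : e a ≠ c := fun h => hc (Finset.mem_image.mpr ⟨a, Finset.mem_univ a, h⟩)
      simp [this]
    rw [hz]; simp

lemma entOf_relabel [Fintype α] [Fintype β] [Fintype γ] (q : α → ℝ) (k : α → β)
    {e : β → γ} (he : Function.Injective e) :
    entOf q (fun s => e (k s)) = entOf q k := by
  unfold entOf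
  rw [push_comp, ent_push_inj _ he]



section MixEnt
variable {V F T : Type*} [Fintype V] [Fintype F] [Fintype T]

lemma push_mix (l : V → ℝ) (r : V → F → ℝ) (f : F → T) :
    push (fun s : V × F => l s.1 * r s.1 s.2) (fun s => (s.1, f s.2))
      = fun ut => l ut.1 * push (r ut.1) f ut.2 := by
  funext ut
  obtain ⟨u, t⟩ := ut
  unfold push
  rw [Fintype.sum_prod_type]
  rw [Finset.sum_eq_single u]
  · rw [Finset.mul_sum]
    refine Finset.sum_congr rfl fun a _ => ?_
    by_cases h : f a = t <;> simp [h, Prod.ext_iff]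
  · intro u' _ hu'
    refine Finset.sum_eq_zero fun a _ => ?_
    simp [Prod.ext_iff, hu']
  · simp

lemma mul_logb_mul (a b : ℝ) :
    (a * b) * Real.logb 2 (a * b) = b * (a * Real.logb 2 a) + a * (b * Real.logb 2 b) := by
  rcases eq_or_ne a 0 with h | h
  · simp [h]
  rcases eq_or_ne b 0 with h' | h'
  · simp [h']
  rw [Real.logb_mul h h']
  ring

lemma entOf_mix (l : V → ℝ) (r : V → F → ℝ) (hr1 : ∀ v, ∑ a, r v a = 1) (f : F → T) :
    entOf (fun s : V × F => l s.1 * r s.1 s.2) (fun s => (s.1, f s.2))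
      = ent l + ∑ v, l v * ent (push (r v) f) := by
  unfold entOf
  rw [push_mix]
  unfold ent
  rw [Fintype.sum_prod_type]
  have hps : ∀ v, ∑ t, push (r v) f t = 1 := fun v => (sum_push (r v) f).trans (hr1 v)
  have hrow : ∀ v, (∑ t, (l v * push (r v) f t) * Real.logb 2 (l v * push (r v) f t))
      = l v * Real.logb 2 (l v) + l v * ∑ t, push (r v) f t * Real.logb 2 (push (r v) f t) := by
    intro v
    rw [Finset.sum_congr rfl fun t _ => mul_logb_mul (l v) (push (r v) f t),
      Finset.sum_add_distrib, ← Finset.sum_mul, hps v, ← Finset.mul_sum]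
    ring
  rw [Finset.sum_congr rfl fun v _ => hrow v, Finset.sum_add_distrib]
  simp only [Finset.sum_neg_distrib, mul_neg]
  ring

lemma entOf_snd {U : Type*} [Fintype U] (q : U × F → ℝ) (f : F → T) :
    entOf q (fun s => f s.2) = ent (push (push q (fun s => s.2)) f) := by
  unfold entOf
  rw [show (fun s : U × F => f s.2) = (fun s : U × F => f ((fun s : U × F => s.2) s)) from rfl,
    push_comp]

lemma push_snd_mix (l : V → ℝ) (r : V → F → ℝ) :
    push (fun s : V × F => l s.1 * r s.1 s.2) (fun s => s.2) = fun a => ∑ v, l v * r v a := by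
  funext a
  unfold push
  rw [Fintype.sum_prod_type]
  refine Finset.sum_congr rfl fun v _ => ?_
  simp

end MixEnt

lemma elim_aux {ι W : Type*} [Fintype ι] [AddCommGroup W] [Module ℝ W] (w : ι → W) :
    ∀ (n : ℕ) (l : ι → ℝ), (∀ i, 0 ≤ l i) → (Finset.univ.filter fun i => l i ≠ 0).card ≤ n →
    ∃ l' : ι → ℝ, (∀ i, 0 ≤ l' i) ∧ (∀ i, l' i ≠ 0 → l i ≠ 0) ∧
      (∑ i, l' i • w i = ∑ i, l i • w i) ∧
      LinearIndependent ℝ (fun j : {i // l' i ≠ 0} => w j.1) := by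
  intro n
  induction n with
  | zero =>
    intro l hl hcard
    refine ⟨l, hl, fun i h => h, rfl, ?_⟩
    have : ∀ i, ¬ (l i ≠ 0) := by
      intro i hi
      have : i ∈ Finset.univ.filter fun i => l i ≠ 0 := by simp [hi]
      have := Finset.card_pos.mpr ⟨i, this⟩
      omega
    haveI : IsEmpty {i // l i ≠ 0} := ⟨fun j => this j.1 j.2⟩
    exact linearIndependent_empty_type
  | succ n ih =>
    intro l hl hcard
    by_cases hLI : LinearIndependent ℝ (fun j : {i // l i ≠ 0} => w j.1)
    · exact ⟨l, hl, fun i h => h, rfl, hLI⟩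
    obtain ⟨g, hgsum, j₀, hgj₀⟩ := Fintype.not_linearIndependent_iff.mp hLI
    -- extend g to c on ι
    have hsubsum : ∀ c : ι → ℝ, (∀ i, l i = 0 → c i = 0) →
        ∑ i, c i • w i = ∑ j : {i // l i ≠ 0}, c j.1 • w j.1 := by
      intro c hc
      rw [← Finset.sum_subtype (Finset.univ.filter fun i => l i ≠ 0)
        (by intro i; simp) (fun i => c i • w i)]
      refine (Finset.sum_subset (Finset.subset_univ _) ?_).symm
      intro i _ hi
      simp only [Finset.mem_filter, Finset.mem_univ, true_and, not_not] at hi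
      rw [hc i hi, zero_smul]
    obtain ⟨c, hcz, hcsum, hcex⟩ :
        ∃ c : ι → ℝ, (∀ i, l i = 0 → c i = 0) ∧ (∑ i, c i • w i = 0) ∧ ∃ i, 0 < c i := by
      by_cases hpos : ∃ j : {i // l i ≠ 0}, 0 < g j
      · refine ⟨fun i => if h : l i ≠ 0 then g ⟨i, h⟩ else 0, fun i hi => by simp [hi], ?_, ?_⟩
        · rw [hsubsum _ (fun i hi => by simp [hi])]
          rw [← hgsum]
          refine Finset.sum_congr rfl fun j _ => ?_
          simp [j.2]
        · obtain ⟨j, hj⟩ := hpos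
          exact ⟨j.1, by simpa [j.2] using hj⟩
      · refine ⟨fun i => if h : l i ≠ 0 then -g ⟨i, h⟩ else 0, fun i hi => by simp [hi], ?_, ?_⟩
        · rw [hsubsum _ (fun i hi => by simp [hi])]
          have : ∑ j : {i // l i ≠ 0}, (-g j) • w j.1 = -∑ j : {i // l i ≠ 0}, g j • w j.1 := by
            simp [neg_smul, Finset.sum_neg_distrib]
          rw [Finset.sum_congr rfl (fun j _ => by simp [j.2] : ∀ j ∈ Finset.univ,
            (if h : l j.1 ≠ 0 then -g ⟨j.1, h⟩ else 0) • w j.1 = (-g j) • w j.1), this, hgsum, neg_zero]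
        · push_neg at hpos
          refine ⟨j₀.1, ?_⟩
          have h1 : g j₀ ≤ 0 := hpos j₀
          have h2 : g j₀ < 0 := lt_of_le_of_ne h1 hgj₀
          simpa [j₀.2] using neg_pos.mpr h2
    -- minimize l i / c i over positive c
    set Pos := Finset.univ.filter fun i => 0 < c i with hPos
    have hPosne : Pos.Nonempty := by
      obtain ⟨i, hi⟩ := hcex
      exact ⟨i, by simp [hPos, hi]⟩
    obtain ⟨i₀, hi₀mem, hi₀min⟩ := Finset.exists_min_image Pos (fun i => l i / c i) hPosne
    have hci₀ : 0 < c i₀ := by simpa [hPos] using hi₀mem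
    have hli₀ : l i₀ ≠ 0 := fun h => by simpa [hcz i₀ h] using hci₀
    set θ := l i₀ / c i₀ with hθ
    have hθ0 : 0 ≤ θ := div_nonneg (hl i₀) hci₀.le
    set l' : ι → ℝ := fun i => l i - θ * c i with hl'
    have hl'0 : ∀ i, 0 ≤ l' i := by
      intro i
      have hli := hl i
      rcases le_or_gt (c i) 0 with h | h
      · have : θ * c i ≤ 0 := mul_nonpos_of_nonneg_of_nonpos hθ0 h
        simp only [hl']; linarith
      · have hmem : i ∈ Pos := by simp [hPos, h]
        have := hi₀min i hmem
        have : θ * c i ≤ l i := by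
          rw [hθ]
          calc l i₀ / c i₀ * c i ≤ l i / c i * c i := by
                apply mul_le_mul_of_nonneg_right this h.le
            _ = l i := div_mul_cancel₀ _ h.ne'
        simp only [hl']; linarith
    have hl'supp : ∀ i, l' i ≠ 0 → l i ≠ 0 := by
      intro i hi h0
      exact hi (by simp [hl', h0, hcz i h0])
    have hl'i₀ : l' i₀ = 0 := by
      simp only [hl', hθ]
      field_simp
      ring
    have hsum' : ∑ i, l' i • w i = ∑ i, l i • w i := by
      simp only [hl', sub_smul, Finset.sum_sub_distrib]
      have : ∑ i, (θ * c i) • w i = θ • ∑ i, c i • w i := by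
        rw [Finset.smul_sum]
        exact Finset.sum_congr rfl fun i _ => (smul_smul θ (c i) (w i)).symm
      rw [this, hcsum, smul_zero, sub_zero]
    have hcard' : (Finset.univ.filter fun i => l' i ≠ 0).card ≤ n := by
      have hss : (Finset.univ.filter fun i => l' i ≠ 0) ⊂ (Finset.univ.filter fun i => l i ≠ 0) := by
        refine Finset.ssubset_iff_of_subset ?_ |>.mpr ⟨i₀, by simp [hli₀], by simp [hl'i₀]⟩
        intro i hi
        simp only [Finset.mem_filter, Finset.mem_univ, true_and] at hi ⊢
        exact hl'supp i hi
      have := Finset.card_lt_card hss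
      omega
    obtain ⟨l'', h0, hsupp, hsum'', hind⟩ := ih l' hl'0 hcard'
    exact ⟨l'', h0, fun i h => hl'supp i (hsupp i h), hsum''.trans hsum', hind⟩

set_option maxHeartbeats 1000000 in
lemma fe_step {F : Type*} [Fintype F] [Nonempty F] (G : (F → ℝ) → ℝ × ℝ) (hG : Continuous G)
    {ι : Type*} [Fintype ι] (l : ι → ℝ) (hl : ∀ i, 0 < l i)
    (r : ι → F → ℝ) (hr0 : ∀ i a, 0 ≤ r i a) (hr1 : ∀ i, ∑ a, r i a = 1)
    (hind : LinearIndependent ℝ (fun i => ((r i, G (r i)) : (F → ℝ) × (ℝ × ℝ))))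
    (hcard : Fintype.card ι = Fintype.card F + 2) :
    ∃ (l' : ι → ℝ) (r' : ι → F → ℝ), (∀ i, 0 ≤ l' i) ∧ (∀ i a, 0 ≤ r' i a) ∧
      (∀ i, ∑ a, r' i a = 1) ∧
      (∑ i, l' i • ((r' i, G (r' i)) : (F → ℝ) × (ℝ × ℝ))
        = ∑ i, l i • ((r i, G (r i)) : (F → ℝ) × (ℝ × ℝ))) ∧ ∃ j, l' j = 0 := by
  haveI : Nonempty ι := Fintype.card_pos_iff.mp (by omega)
  set w : ι → (F → ℝ) × (ℝ × ℝ) := fun i => (r i, G (r i)) with hw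
  have hfr : Module.finrank ℝ ((F → ℝ) × (ℝ × ℝ)) = Fintype.card F + 2 := by
    rw [Module.finrank_prod, Module.finrank_pi, Module.finrank_prod, Module.finrank_self]
  set Bs := basisOfLinearIndependentOfCardEqFinrank hind (by rw [hcard, hfr]) with hBsdef
  have hBs : ⇑Bs = w := coe_basisOfLinearIndependentOfCardEqFinrank hind _
  obtain ⟨i₁, i₂, hne⟩ := Fintype.exists_pair_of_one_lt_card
    (by rw [hcard]; have := Fintype.card_pos (α := F); omega)
  set σ : ℝ → F → ℝ := fun t a => (1 - t) * r i₁ a + t * r i₂ a with hσdef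
  have hσcont : Continuous σ := by
    refine continuous_pi fun a => ?_
    fun_prop
  set γ : ℝ → (F → ℝ) × (ℝ × ℝ) := fun t => (σ t, G (σ t)) with hγdef
  have hγcont : Continuous γ := Continuous.prodMk hσcont (hG.comp hσcont)
  set b : ℝ → ι → ℝ := fun t i => Bs.repr (γ t) i with hbdef
  have hbcont : ∀ i, Continuous fun t => b t i := by
    intro i
    have : Continuous ⇑(Bs.coord i) := (Bs.coord i).continuous_of_finiteDimensional
    have := this.comp hγcont
    simpa [Module.Basis.coord_apply, Function.comp_def, hbdef] using this
  set c : ι → ℝ → ℝ := fun i t => b t i / l i with hcdef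
  have hccont : ∀ i, Continuous (c i) := fun i => (hbcont i).div_const _
  -- endpoint values
  have hσ0 : σ 0 = r i₁ := by funext a; simp [hσdef]
  have hσ1 : σ 1 = r i₂ := by funext a; simp [hσdef]
  have hγ0 : γ 0 = w i₁ := by rw [hγdef]; simp [hσ0, hw]
  have hγ1 : γ 1 = w i₂ := by rw [hγdef]; simp [hσ1, hw]
  have hb0 : ∀ i, b 0 i = if i₁ = i then 1 else 0 := by
    intro i
    rw [hbdef]
    simp only [hγ0, ← hBs, Bs.repr_self]
    exact Finsupp.single_apply
  have hb1 : ∀ i, b 1 i = if i₂ = i then 1 else 0 := by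
    intro i
    rw [hbdef]
    simp only [hγ1, ← hBs, Bs.repr_self]
    exact Finsupp.single_apply
  -- the two closed sets
  set A : Set ℝ := {t | ∀ i, c i t ≤ c i₁ t} with hAdef
  set Bset : Set ℝ := ⋃ i, {t | i ≠ i₁ ∧ ∀ i', c i' t ≤ c i t} with hBsetdef
  have hAclosed : IsClosed A := by
    have : A = ⋂ i, {t | c i t ≤ c i₁ t} := by ext t; simp [hAdef, Set.mem_iInter]
    rw [this]
    exact isClosed_iInter fun i => isClosed_le (hccont i) (hccont i₁)
  have hBclosed : IsClosed Bset := by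
    refine isClosed_iUnion_of_finite fun i => ?_
    by_cases hi : i = i₁
    · have : {t : ℝ | i ≠ i₁ ∧ ∀ i', c i' t ≤ c i t} = ∅ := by ext t; simp [hi]
      rw [this]; exact isClosed_empty
    · have : {t : ℝ | i ≠ i₁ ∧ ∀ i', c i' t ≤ c i t} = ⋂ i', {t | c i' t ≤ c i t} := by
        ext t; simp [hi, Set.mem_iInter]
      rw [this]
      exact isClosed_iInter fun i' => isClosed_le (hccont i') (hccont i)
  have hcover : Set.Icc (0:ℝ) 1 ⊆ A ∪ Bset := by
    intro t _
    obtain ⟨im, _, hmax⟩ := Finset.exists_max_image Finset.univ (fun i => c i t)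
      Finset.univ_nonempty
    by_cases him : im = i₁
    · left
      intro i
      rw [← him]
      exact hmax i (Finset.mem_univ i)
    · right
      exact Set.mem_iUnion.mpr ⟨im, him, fun i' => hmax i' (Finset.mem_univ i')⟩
  have h0A : (0:ℝ) ∈ Set.Icc (0:ℝ) 1 ∩ A := by
    refine ⟨by norm_num, fun i => ?_⟩
    show b 0 i / l i ≤ b 0 i₁ / l i₁
    by_cases hii : i₁ = i
    · subst hii; exact le_rfl
    · rw [hb0 i, hb0 i₁, if_neg hii, if_pos rfl, zero_div]
      exact div_nonneg zero_le_one (hl i₁).le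
  have h1B : (1:ℝ) ∈ Set.Icc (0:ℝ) 1 ∩ Bset := by
    refine ⟨by norm_num, Set.mem_iUnion.mpr ⟨i₂, Ne.symm hne, fun i' => ?_⟩⟩
    show b 1 i' / l i' ≤ b 1 i₂ / l i₂
    by_cases hii : i₂ = i'
    · subst hii; exact le_rfl
    · rw [hb1 i', hb1 i₂, if_neg hii, if_pos rfl, zero_div]
      exact div_nonneg zero_le_one (hl i₂).le
  obtain ⟨ts, htsIcc, htsA, htsB⟩ :
      ∃ ts, ts ∈ Set.Icc (0:ℝ) 1 ∧ ts ∈ A ∧ ts ∈ Bset := by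
    have := (isPreconnected_closed_iff.mp isPreconnected_Icc) A Bset hAclosed hBclosed
      hcover ⟨0, h0A⟩ ⟨1, h1B⟩
    obtain ⟨t, ht1, ht2, ht3⟩ := this
    exact ⟨t, ht1, ht2, ht3⟩
  -- a maximizer j ≠ i₁ also achieving the max
  obtain ⟨j, hjne, hjmax⟩ := Set.mem_iUnion.mp htsB
  have htsA' : ∀ i, c i ts ≤ c i₁ ts := htsA
  have hcji : c j ts = c i₁ ts := le_antisymm (htsA' j) (hjmax i₁)
  -- mass functional
  set hmass : ((F → ℝ) × (ℝ × ℝ)) →ₗ[ℝ] ℝ :=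
    { toFun := fun z => ∑ a, z.1 a
      map_add' := by intro x y; simp [Finset.sum_add_distrib]
      map_smul' := by intro m x; simp [Finset.mul_sum] } with hmassdef
  have hmw : ∀ i, hmass (w i) = 1 := by
    intro i
    simp [hmassdef, hw, hr1 i]
  have hmγ : hmass (γ ts) = 1 := by
    simp only [hmassdef, hγdef, LinearMap.coe_mk, AddHom.coe_mk]
    simp only [hσdef]
    rw [Finset.sum_add_distrib, ← Finset.mul_sum, ← Finset.mul_sum, hr1 i₁, hr1 i₂]
    ring
  have hsum1 : ∑ i, b ts i = 1 := by
    have hrepr : ∑ i, b ts i • w i = γ ts := by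
      have := Bs.sum_repr (γ ts)
      simpa [hBs, hbdef] using this
    have := congrArg hmass hrepr
    rw [map_sum] at this
    simp only [map_smul, hmw, smul_eq_mul, mul_one] at this
    rw [this, hmγ]
  -- positivity of the max
  set m := c i₁ ts with hmdef
  have hble : ∀ i, b ts i ≤ m * l i := by
    intro i
    have := htsA' i
    rw [hcdef] at this
    calc b ts i = (b ts i / l i) * l i := by field_simp [(hl i).ne']
      _ ≤ m * l i := mul_le_mul_of_nonneg_right this (hl i).le
  have hmpos : 0 < m := by
    by_contra h
    push_neg at h
    have : ∀ i, b ts i ≤ 0 := fun i =>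
      (hble i).trans (mul_nonpos_of_nonpos_of_nonneg h (hl i).le)
    have : ∑ i, b ts i ≤ 0 := Finset.sum_nonpos fun i _ => this i
    rw [hsum1] at this
    linarith
  have hbi₁ : b ts i₁ = m * l i₁ := by
    rw [hmdef, hcdef]
    rw [div_mul_cancel₀ _ (hl i₁).ne']
  have hbj : b ts j = m * l j := by
    have : c j ts = m := hcji
    rw [hcdef] at this
    rw [← this]
    field_simp [(hl j).ne']
  -- construct the new representation
  set l' : ι → ℝ := fun i => if i = i₁ then 1 / m else l i - b ts i / m with hl'def
  set r' : ι → F → ℝ := fun i => if i = i₁ then σ ts else r i with hr'def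
  have hσts0 : ∀ a, 0 ≤ σ ts a := by
    intro a
    obtain ⟨h0, h1⟩ := htsIcc
    have := hr0 i₁ a; have := hr0 i₂ a
    simp only [hσdef]
    nlinarith
  have hσts1 : ∑ a, σ ts a = 1 := by
    simp only [hσdef]
    rw [Finset.sum_add_distrib, ← Finset.mul_sum, ← Finset.mul_sum, hr1 i₁, hr1 i₂]
    ring
  refine ⟨l', r', ?_, ?_, ?_, ?_, ⟨j, ?_⟩⟩
  · intro i
    simp only [hl'def]
    by_cases hi : i = i₁
    · rw [if_pos hi]
      positivity
    · rw [if_neg hi]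
      have h1 : b ts i / m ≤ l i := by
        rw [div_le_iff₀ hmpos]
        calc b ts i ≤ m * l i := hble i
          _ = l i * m := mul_comm _ _
      linarith
  · intro i a
    simp only [hr'def]
    by_cases hi : i = i₁
    · rw [if_pos hi]; exact hσts0 a
    · rw [if_neg hi]; exact hr0 i a
  · intro i
    simp only [hr'def]
    by_cases hi : i = i₁
    · rw [if_pos hi]; exact hσts1
    · rw [if_neg hi]; exact hr1 i
  · -- the sum identity
    have hw' : ∀ i, ((r' i, G (r' i)) : (F → ℝ) × (ℝ × ℝ)) = if i = i₁ then γ ts else w i := by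
      intro i
      by_cases hi : i = i₁
      · simp only [hr'def, if_pos hi]
        rfl
      · simp only [hr'def, if_neg hi, hw]
    have hγrepr : γ ts = ∑ i, b ts i • w i := by
      conv_lhs => rw [← Bs.sum_repr (γ ts)]
      refine Finset.sum_congr rfl fun i _ => ?_
      simp only [hBs]
      rfl
    calc ∑ i, l' i • ((r' i, G (r' i)) : (F → ℝ) × (ℝ × ℝ))
        = l' i₁ • γ ts + ∑ i ∈ Finset.univ.erase i₁, l' i • w i := by
          rw [← Finset.add_sum_erase _ _ (Finset.mem_univ i₁)]
          congr 1
          · rw [hw' i₁, if_pos rfl]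
          · refine Finset.sum_congr rfl fun i hi => ?_
            rw [hw' i, if_neg (Finset.ne_of_mem_erase hi)]
      _ = ∑ i, (b ts i / m) • w i + ∑ i ∈ Finset.univ.erase i₁, l' i • w i := by
          congr 1
          rw [hγrepr, Finset.smul_sum, hl'def]
          simp only [if_pos rfl]
          refine Finset.sum_congr rfl fun i _ => ?_
          rw [smul_smul]
          congr 1
          field_simp
          simp [hmpos.ne']
      _ = (b ts i₁ / m) • w i₁ + ∑ i ∈ Finset.univ.erase i₁, ((b ts i / m) • w i + l' i • w i) := by
          rw [← Finset.add_sum_erase _ (fun i => (b ts i / m) • w i) (Finset.mem_univ i₁),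
            Finset.sum_add_distrib]
          abel
      _ = l i₁ • w i₁ + ∑ i ∈ Finset.univ.erase i₁, l i • w i := by
          congr 1
          · congr 1
            rw [hbi₁]
            field_simp
          · refine Finset.sum_congr rfl fun i hi => ?_
            simp only [hl'def]
            rw [if_neg (Finset.ne_of_mem_erase hi), ← add_smul]
            congr 1
            ring
      _ = ∑ i, l i • w i := Finset.add_sum_erase Finset.univ (fun i => l i • w i) (Finset.mem_univ i₁)
  · simp only [hl'def, if_neg hjne, hbj]
    rw [mul_comm, mul_div_assoc, div_self hmpos.ne', mul_one, sub_self]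

-- sum over support subtype
lemma restrict_sum {ι W : Type*} [Fintype ι] [AddCommGroup W] [Module ℝ W]
    (l : ι → ℝ) (v : ι → W) :
    ∑ j : {i // l i ≠ 0}, l j.1 • v j.1 = ∑ i, l i • v i := by
  rw [← Finset.sum_subtype (Finset.univ.filter fun i => l i ≠ 0)
    (by intro i; simp) (fun i => l i • v i)]
  refine Finset.sum_subset (Finset.subset_univ _) ?_
  intro i _ hi
  simp only [Finset.mem_filter, Finset.mem_univ, true_and, not_not] at hi
  rw [hi, zero_smul]

lemma embed_case {F : Type*} [Fintype F] [Nonempty F] (G : (F → ℝ) → ℝ × ℝ)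
    {ι : Type*} [Fintype ι] (l : ι → ℝ) (hl : ∀ i, 0 ≤ l i)
    (r : ι → F → ℝ) (hr0 : ∀ i a, 0 ≤ r i a) (hr1 : ∀ i, ∑ a, r i a = 1)
    {κ : Type*} [Fintype κ] (hκ : Fintype.card ι ≤ Fintype.card κ) :
    ∃ (μ : κ → ℝ) (ρ : κ → F → ℝ), (∀ i, 0 ≤ μ i) ∧ (∀ i a, 0 ≤ ρ i a) ∧
      (∀ i, ∑ a, ρ i a = 1) ∧
      (∑ i, μ i • ((ρ i, G (ρ i)) : (F → ℝ) × (ℝ × ℝ))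
        = ∑ i, l i • ((r i, G (r i)) : (F → ℝ) × (ℝ × ℝ))) := by
  obtain ⟨e⟩ := Function.Embedding.nonempty_of_card_le hκ
  set μ : κ → ℝ := fun k => if h : ∃ j, e j = k then l h.choose else 0 with hμdef
  set ρ : κ → F → ℝ := fun k => if h : ∃ j, e j = k then r h.choose
    else (fun _ => (Fintype.card F : ℝ)⁻¹) with hρdef
  have hcardF : (0:ℝ) < Fintype.card F := by
    have := Fintype.card_pos (α := F)
    exact_mod_cast this
  have hchoose : ∀ j : ι, ∀ (h : ∃ j', e j' = e j), h.choose = j := by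
    intro j h
    exact e.injective h.choose_spec
  refine ⟨μ, ρ, ?_, ?_, ?_, ?_⟩
  · intro k
    simp only [hμdef]
    split_ifs with h
    · exact hl _
    · exact le_rfl
  · intro k a
    simp only [hρdef]
    split_ifs with h
    · exact hr0 _ a
    · positivity
  · intro k
    simp only [hρdef]
    split_ifs with h
    · exact hr1 _
    · rw [Finset.sum_const, Finset.card_univ, nsmul_eq_mul]
      field_simp
  · rw [← Finset.sum_subset (Finset.subset_univ (Finset.univ.image e))]
    · rw [Finset.sum_image (fun a _ b _ h => e.injective h)]
      refine Finset.sum_congr rfl fun j _ => ?_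
      have h : ∃ j', e j' = e j := ⟨j, rfl⟩
      have hμ : μ (e j) = l j := by simp only [hμdef, dif_pos h, hchoose j h]
      have hρ : ρ (e j) = r j := by simp only [hρdef, dif_pos h, hchoose j h]
      rw [hμ, hρ]
    · intro k _ hk
      have h : ¬ ∃ j, e j = k := by
        intro ⟨j, hj⟩
        exact hk (Finset.mem_image.mpr ⟨j, Finset.mem_univ j, hj⟩)
      simp only [hμdef, dif_neg h, zero_smul]

lemma main_reduce {F : Type*} [Fintype F] [Nonempty F] (G : (F → ℝ) → ℝ × ℝ) (hG : Continuous G)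
    {U : Type*} [Fintype U] (l : U → ℝ) (hl : ∀ u, 0 ≤ l u)
    (r : U → F → ℝ) (hr0 : ∀ u a, 0 ≤ r u a) (hr1 : ∀ u, ∑ a, r u a = 1)
    {κ : Type*} [Fintype κ] (hκ : Fintype.card F + 1 ≤ Fintype.card κ) :
    ∃ (μ : κ → ℝ) (ρ : κ → F → ℝ), (∀ i, 0 ≤ μ i) ∧ (∀ i a, 0 ≤ ρ i a) ∧
      (∀ i, ∑ a, ρ i a = 1) ∧
      (∑ i, μ i • ((ρ i, G (ρ i)) : (F → ℝ) × (ℝ × ℝ))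
        = ∑ u, l u • ((r u, G (r u)) : (F → ℝ) × (ℝ × ℝ))) := by
  obtain ⟨l₁, hl₁0, hl₁supp, hl₁sum, hl₁ind⟩ :=
    elim_aux (fun u => ((r u, G (r u)) : (F → ℝ) × (ℝ × ℝ))) (Fintype.card U) l hl
      (le_trans (Finset.card_filter_le _ _) (le_of_eq Finset.card_univ))
  set T := {u // l₁ u ≠ 0} with hTdef
  have hfr : Module.finrank ℝ ((F → ℝ) × (ℝ × ℝ)) = Fintype.card F + 2 := by
    rw [Module.finrank_prod, Module.finrank_pi, Module.finrank_prod, Module.finrank_self]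
  have hcardT : Fintype.card T ≤ Fintype.card F + 2 := by
    have := hl₁ind.fintype_card_le_finrank
    rwa [hfr] at this
  have hsumT : ∑ j : T, l₁ j.1 • ((r j.1, G (r j.1)) : (F → ℝ) × (ℝ × ℝ))
      = ∑ u, l u • ((r u, G (r u)) : (F → ℝ) × (ℝ × ℝ)) :=
    (restrict_sum l₁ (fun u => ((r u, G (r u)) : (F → ℝ) × (ℝ × ℝ)))).trans hl₁sum
  by_cases hk : Fintype.card T ≤ Fintype.card F + 1
  · obtain ⟨μ, ρ, h1, h2, h3, h4⟩ := embed_case G (fun j : T => l₁ j.1) (fun j => hl₁0 j.1)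
      (fun j => r j.1) (fun j a => hr0 j.1 a) (fun j => hr1 j.1) (le_trans hk hκ)
    exact ⟨μ, ρ, h1, h2, h3, h4.trans hsumT⟩
  · have hcardT' : Fintype.card T = Fintype.card F + 2 := by omega
    have hlpos : ∀ j : T, 0 < l₁ j.1 := fun j => lt_of_le_of_ne (hl₁0 j.1) (Ne.symm j.2)
    obtain ⟨l₂, r₂, h20, h2r0, h2r1, h2sum, j₀, hj₀⟩ := fe_step G hG (fun j : T => l₁ j.1) hlpos
      (fun j => r j.1) (fun j a => hr0 j.1 a) (fun j => hr1 j.1) hl₁ind hcardT'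
    -- support of l₂ misses j₀
    have hcard2 : Fintype.card {j : T // l₂ j ≠ 0} ≤ Fintype.card F + 1 := by
      have hlt : Fintype.card {j : T // l₂ j ≠ 0} < Fintype.card T := by
        apply Fintype.card_subtype_lt (x := j₀)
        simp [hj₀]
      omega
    have hsum2 : ∑ j' : {j : T // l₂ j ≠ 0}, l₂ j'.1 • ((r₂ j'.1, G (r₂ j'.1)) : (F → ℝ) × (ℝ × ℝ))
        = ∑ j : T, l₂ j • ((r₂ j, G (r₂ j)) : (F → ℝ) × (ℝ × ℝ)) :=
      restrict_sum l₂ (fun j : T => ((r₂ j, G (r₂ j)) : (F → ℝ) × (ℝ × ℝ)))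
    obtain ⟨μ, ρ, h1, h2, h3, h4⟩ := embed_case G (fun j' : {j : T // l₂ j ≠ 0} => l₂ j'.1)
      (fun j' => h20 j'.1) (fun j' => r₂ j'.1) (fun j' a => h2r0 j'.1 a) (fun j' => h2r1 j'.1)
      (le_trans hcard2 hκ)
    exact ⟨μ, ρ, h1, h2, h3, h4.trans (hsum2.trans (h2sum.trans hsumT))⟩

section Quant
def wzG1 {X Y Z : Type*} [Fintype X] [Fintype Y] [Fintype Z] (r : X × Y × Z → ℝ) : ℝ :=
  ent (push r (fun a => a.1)) - ent (push r (fun a => (a.2.1, a.1)))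
  + ent (push r (fun a => (a.2.2, a.2.1))) + ent (push r (fun a => (a.1, a.2.1)))
  - ent (push r (fun a => ((a.2.2, a.1), a.2.1))) - ent (push r (fun a => a.2.1))

def wzG2 {X Y Z : Type*} [Fintype X] [Fintype Y] [Fintype Z] (r : X × Y × Z → ℝ) : ℝ :=
  ent (push r (fun a => a.2.1)) - ent (push r (fun a => a.1))

lemma inj_assoc {V Yt Xt : Type*} :
    Function.Injective (fun w : V × (Yt × Xt) => ((w.1, w.2.1), w.2.2)) := by
  intro ⟨a, b, c⟩ ⟨d, e, f⟩ h
  simp only [Prod.mk.injEq] at h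
  simp [h.1.1, h.1.2, h.2]

lemma inj_swap {V C Yt : Type*} :
    Function.Injective (fun w : V × (C × Yt) => (w.2.1, (w.1, w.2.2))) := by
  intro ⟨a, b, c⟩ ⟨d, e, f⟩ h
  simp only [Prod.mk.injEq] at h
  simp [h.1, h.2.1, h.2.2]

variable {V X Y Z : Type*} [Fintype V] [Fintype X] [Fintype Y] [Fintype Z]

lemma quant1 (l : V → ℝ) (r : V → X × Y × Z → ℝ) (hr1 : ∀ v, ∑ a, r v a = 1) :
    cmiOf (fun s : V × (X × Y × Z) => l s.1 * r s.1 s.2)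
        (fun s => s.1) (fun s => s.2.2.1) (fun s => s.2.1)
      + cmiOf (fun s : V × (X × Y × Z) => l s.1 * r s.1 s.2)
        (fun s => s.2.2.2) (fun s => s.2.1) (fun s => (s.1, s.2.2.1))
    = ent (push (push (fun s : V × (X × Y × Z) => l s.1 * r s.1 s.2) (fun s => s.2))
          (fun a => (a.2.1, a.1)))
      - ent (push (push (fun s : V × (X × Y × Z) => l s.1 * r s.1 s.2) (fun s => s.2))
          (fun a => a.1))
      + ∑ v, l v * wzG1 (r v) := by
  set q : V × (X × Y × Z) → ℝ := fun s => l s.1 * r s.1 s.2 with hq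
  have e1 : entOf q (fun s => (s.1, s.2.1))
      = ent l + ∑ v, l v * ent (push (r v) (fun a => a.1)) := by
    rw [hq]; exact entOf_mix l r hr1 (fun a => a.1)
  have e2 : entOf q (fun s => s.2.1)
      = ent (push (push q (fun s => s.2)) (fun a => a.1)) :=
    entOf_snd q (fun a => a.1)
  have e3 : entOf q (fun s => (s.2.2.1, s.2.1))
      = ent (push (push q (fun s => s.2)) (fun a => (a.2.1, a.1))) :=
    entOf_snd q (fun a => (a.2.1, a.1))
  have e4 : entOf q (fun s => ((s.1, s.2.2.1), s.2.1))
      = ent l + ∑ v, l v * ent (push (r v) (fun a => (a.2.1, a.1))) := by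
    have h := entOf_relabel q (fun s : V × (X × Y × Z) => (s.1, (s.2.2.1, s.2.1)))
      (inj_assoc (V := V) (Yt := Y) (Xt := X))
    rw [show (fun s : V × (X × Y × Z) => ((s.1, s.2.2.1), s.2.1))
      = fun s : V × (X × Y × Z) =>
        (fun w : V × (Y × X) => ((w.1, w.2.1), w.2.2)) ((s.1, (s.2.2.1, s.2.1))) from rfl, h]
    rw [hq]; exact entOf_mix l r hr1 (fun a => (a.2.1, a.1))
  have e5 : entOf q (fun s => (s.2.2.2, (s.1, s.2.2.1)))
      = ent l + ∑ v, l v * ent (push (r v) (fun a => (a.2.2, a.2.1))) := by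
    have h := entOf_relabel q (fun s : V × (X × Y × Z) => (s.1, (s.2.2.2, s.2.2.1)))
      (inj_swap (V := V) (C := Z) (Yt := Y))
    rw [show (fun s : V × (X × Y × Z) => (s.2.2.2, (s.1, s.2.2.1)))
      = fun s : V × (X × Y × Z) =>
        (fun w : V × (Z × Y) => (w.2.1, (w.1, w.2.2))) ((s.1, (s.2.2.2, s.2.2.1))) from rfl, h]
    rw [hq]; exact entOf_mix l r hr1 (fun a => (a.2.2, a.2.1))
  have e6 : entOf q (fun s => (s.1, s.2.2.1))
      = ent l + ∑ v, l v * ent (push (r v) (fun a => a.2.1)) := by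
    rw [hq]; exact entOf_mix l r hr1 (fun a => a.2.1)
  have e7 : entOf q (fun s => (s.2.1, (s.1, s.2.2.1)))
      = ent l + ∑ v, l v * ent (push (r v) (fun a => (a.1, a.2.1))) := by
    have h := entOf_relabel q (fun s : V × (X × Y × Z) => (s.1, (s.2.1, s.2.2.1)))
      (inj_swap (V := V) (C := X) (Yt := Y))
    rw [show (fun s : V × (X × Y × Z) => (s.2.1, (s.1, s.2.2.1)))
      = fun s : V × (X × Y × Z) =>
        (fun w : V × (X × Y) => (w.2.1, (w.1, w.2.2))) ((s.1, (s.2.1, s.2.2.1))) from rfl, h]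
    rw [hq]; exact entOf_mix l r hr1 (fun a => (a.1, a.2.1))
  have e8 : entOf q (fun s => ((s.2.2.2, s.2.1), (s.1, s.2.2.1)))
      = ent l + ∑ v, l v * ent (push (r v) (fun a => ((a.2.2, a.1), a.2.1))) := by
    have h := entOf_relabel q (fun s : V × (X × Y × Z) => (s.1, ((s.2.2.2, s.2.1), s.2.2.1)))
      (inj_swap (V := V) (C := Z × X) (Yt := Y))
    rw [show (fun s : V × (X × Y × Z) => ((s.2.2.2, s.2.1), (s.1, s.2.2.1)))
      = fun s : V × (X × Y × Z) =>
        (fun w : V × ((Z × X) × Y) => (w.2.1, (w.1, w.2.2)))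
          ((s.1, ((s.2.2.2, s.2.1), s.2.2.1))) from rfl, h]
    rw [hq]; exact entOf_mix l r hr1 (fun a => ((a.2.2, a.1), a.2.1))
  simp only [cmiOf, condEnt]
  rw [e1, e2, e3, e4, e5, e6, e7, e8]
  simp only [wzG1, mul_sub, mul_add, Finset.sum_sub_distrib, Finset.sum_add_distrib]
  ring

lemma quant2 (l : V → ℝ) (r : V → X × Y × Z → ℝ) (hr1 : ∀ v, ∑ a, r v a = 1) :
    miOf (fun s : V × (X × Y × Z) => l s.1 * r s.1 s.2) (fun s => s.1) (fun s => s.2.1)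
      - miOf (fun s : V × (X × Y × Z) => l s.1 * r s.1 s.2) (fun s => s.1) (fun s => s.2.2.1)
    = ent (push (push (fun s : V × (X × Y × Z) => l s.1 * r s.1 s.2) (fun s => s.2))
          (fun a => a.1))
      - ent (push (push (fun s : V × (X × Y × Z) => l s.1 * r s.1 s.2) (fun s => s.2))
          (fun a => a.2.1))
      + ∑ v, l v * wzG2 (r v) := by
  set q : V × (X × Y × Z) → ℝ := fun s => l s.1 * r s.1 s.2 with hq
  have e1 : entOf q (fun s => (s.1, s.2.1))
      = ent l + ∑ v, l v * ent (push (r v) (fun a => a.1)) := by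
    rw [hq]; exact entOf_mix l r hr1 (fun a => a.1)
  have e2 : entOf q (fun s => s.2.1)
      = ent (push (push q (fun s => s.2)) (fun a => a.1)) :=
    entOf_snd q (fun a => a.1)
  have e6 : entOf q (fun s => (s.1, s.2.2.1))
      = ent l + ∑ v, l v * ent (push (r v) (fun a => a.2.1)) := by
    rw [hq]; exact entOf_mix l r hr1 (fun a => a.2.1)
  have e9 : entOf q (fun s => s.2.2.1)
      = ent (push (push q (fun s => s.2)) (fun a => a.2.1)) :=
    entOf_snd q (fun a => a.2.1)
  simp only [miOf]
  rw [e1, e2, e6, e9]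
  simp only [wzG2, mul_sub, Finset.sum_sub_distrib]
  ring

end Quant

lemma ent_push_cont {F T : Type*} [Fintype F] [Fintype T] (f : F → T) :
    Continuous fun r : F → ℝ => ent (push r f) := by
  unfold ent push
  refine Continuous.neg (continuous_finset_sum _ fun t _ => ?_)
  have h1 : Continuous fun r : F → ℝ => ∑ s, if f s = t then r s else 0 :=
    continuous_finset_sum _ fun s _ => by
      by_cases h : f s = t
      · simpa [h] using continuous_apply s
      · simpa [h] using (continuous_const : Continuous fun _ : F → ℝ => (0:ℝ))
  have h2 : Continuous fun x : ℝ => x * Real.logb 2 x := by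
    simpa [Real.logb, mul_div_assoc] using Real.continuous_mul_log.div_const (Real.log 2)
  exact h2.comp h1

lemma wzG_cont {X Y Z : Type*} [Fintype X] [Fintype Y] [Fintype Z] :
    Continuous (fun ρ : (X × Y × Z) → ℝ => (wzG1 ρ, wzG2 ρ)) := by
  apply Continuous.prodMk
  · unfold wzG1
    exact (((((ent_push_cont _).sub (ent_push_cont _)).add (ent_push_cont _)).add
      (ent_push_cont _)).sub (ent_push_cont _)).sub (ent_push_cont _)
  · unfold wzG2
    exact (ent_push_cont _).sub (ent_push_cont _)


end AuxWZ

theorem stmt17 {U X Y Z : Type*} [Fintype U] [Fintype X] [Fintype Y] [Fintype Z]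
    (p : U × X × Y × Z → ℝ) (hp : ∀ s, 0 ≤ p s) (hp1 : ∑ s, p s = 1) :
    ∃ q : Fin (Fintype.card X * Fintype.card Y * Fintype.card Z + 1) × X × Y × Z → ℝ,
      (∀ s, 0 ≤ q s) ∧ (∑ s, q s = 1)
      ∧ (∀ a : X × Y × Z, push q (fun s => s.2) a = push p (fun s => s.2) a)
      ∧ cmiOf q (fun s => s.1) (fun s => s.2.2.1) (fun s => s.2.1)
          + cmiOf q (fun s => s.2.2.2) (fun s => s.2.1) (fun s => (s.1, s.2.2.1))
        = cmiOf p (fun s => s.1) (fun s => s.2.2.1) (fun s => s.2.1)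
          + cmiOf p (fun s => s.2.2.2) (fun s => s.2.1) (fun s => (s.1, s.2.2.1))
      ∧ miOf q (fun s => s.1) (fun s => s.2.1) - miOf q (fun s => s.1) (fun s => s.2.2.1)
        = miOf p (fun s => s.1) (fun s => s.2.1) - miOf p (fun s => s.1) (fun s => s.2.2.1) := by
  classical
  rcases isEmpty_or_nonempty (X × Y × Z) with hF | hF
  · exfalso
    haveI : IsEmpty (U × X × Y × Z) := ⟨fun s => hF.false s.2⟩
    rw [Finset.univ_eq_empty, Finset.sum_empty] at hp1
    exact one_ne_zero hp1.symm
  set l : U → ℝ := fun u => ∑ a, p (u, a) with hldef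
  set r : U → (X × Y × Z) → ℝ := fun u => if l u = 0 then
      (fun _ => (Fintype.card (X × Y × Z) : ℝ)⁻¹) else (fun a => p (u, a) / l u) with hrdef
  have hcardF : (0:ℝ) < Fintype.card (X × Y × Z) := by
    have := Fintype.card_pos (α := X × Y × Z)
    exact_mod_cast this
  have hl0 : ∀ u, 0 ≤ l u := fun u => Finset.sum_nonneg fun a _ => hp (u, a)
  have hr0 : ∀ u a, 0 ≤ r u a := by
    intro u a
    simp only [hrdef]
    split_ifs with h
    · positivity
    · exact div_nonneg (hp (u, a)) (hl0 u)
  have hr1 : ∀ u, ∑ a, r u a = 1 := by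
    intro u
    simp only [hrdef]
    split_ifs with h
    · rw [Finset.sum_const, Finset.card_univ, nsmul_eq_mul]
      exact mul_inv_cancel₀ hcardF.ne' 
    · rw [← Finset.sum_div]
      exact div_self h
  have hpeq : p = fun s : U × (X × Y × Z) => l s.1 * r s.1 s.2 := by
    funext s
    obtain ⟨u, a⟩ := s
    simp only [hrdef]
    by_cases h : l u = 0
    · rw [if_pos h, h, zero_mul]
      have hle : p (u, a) ≤ l u := Finset.single_le_sum (fun a _ => hp (u, a)) (Finset.mem_univ a)
      have h0 := hp (u, a)
      rw [h] at hle
      linarith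
    · rw [if_neg h]
      field_simp
  have hκ : Fintype.card (X × Y × Z) + 1
      ≤ Fintype.card (Fin (Fintype.card X * Fintype.card Y * Fintype.card Z + 1)) := by
    simp [Fintype.card_prod, mul_assoc]
  obtain ⟨μ, ρ, hμ0, hρ0, hρ1, hsum⟩ :=
    main_reduce (fun w => (wzG1 w, wzG2 w)) wzG_cont l hl0 r hr0 hr1 hκ
  set q : Fin (Fintype.card X * Fintype.card Y * Fintype.card Z + 1) × (X × Y × Z) → ℝ :=
    fun s => μ s.1 * ρ s.1 s.2 with hqdef
  have hfst : ∀ a, ∑ i, μ i * ρ i a = ∑ u, l u * r u a := by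
    intro a
    have h := congrArg (fun z : ((X × Y × Z) → ℝ) × (ℝ × ℝ) => z.1 a) hsum
    simpa [Prod.fst_sum, Finset.sum_apply, Pi.smul_apply, smul_eq_mul] using h
  have hg1 : ∑ i, μ i * wzG1 (ρ i) = ∑ u, l u * wzG1 (r u) := by
    have h := congrArg (fun z : ((X × Y × Z) → ℝ) × (ℝ × ℝ) => z.2.1) hsum
    simpa [Prod.snd_sum, Prod.fst_sum, smul_eq_mul] using h
  have hg2 : ∑ i, μ i * wzG2 (ρ i) = ∑ u, l u * wzG2 (r u) := by
    have h := congrArg (fun z : ((X × Y × Z) → ℝ) × (ℝ × ℝ) => z.2.2) hsum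
    simpa [Prod.snd_sum, smul_eq_mul] using h
  have hmarg : push q (fun s => s.2)
      = push (fun s : U × (X × Y × Z) => l s.1 * r s.1 s.2) (fun s => s.2) := by
    rw [hqdef, push_snd_mix, push_snd_mix]
    funext a
    exact hfst a
  have hmargp : push q (fun s => s.2) = push p (fun s => s.2) := by
    rw [hmarg, ← hpeq]
  refine ⟨q, ?_, ?_, ?_, ?_, ?_⟩
  · intro s
    exact mul_nonneg (hμ0 s.1) (hρ0 s.1 s.2)
  · calc ∑ s, q s = ∑ a, push q (fun s => s.2) a := (sum_push q _).symm
      _ = ∑ a, push p (fun s => s.2) a := by rw [hmargp]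
      _ = ∑ s, p s := sum_push p _
      _ = 1 := hp1
  · intro a
    exact congrFun hmargp a
  · calc cmiOf q (fun s => s.1) (fun s => s.2.2.1) (fun s => s.2.1)
          + cmiOf q (fun s => s.2.2.2) (fun s => s.2.1) (fun s => (s.1, s.2.2.1))
        = ent (push (push q (fun s => s.2)) (fun a => (a.2.1, a.1)))
          - ent (push (push q (fun s => s.2)) (fun a => a.1))
          + ∑ i, μ i * wzG1 (ρ i) := quant1 μ ρ hρ1
      _ = ent (push (push p (fun s => s.2)) (fun a => (a.2.1, a.1)))
          - ent (push (push p (fun s => s.2)) (fun a => a.1))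
          + ∑ u, l u * wzG1 (r u) := by rw [hmargp, hg1]
      _ = cmiOf p (fun s => s.1) (fun s => s.2.2.1) (fun s => s.2.1)
          + cmiOf p (fun s => s.2.2.2) (fun s => s.2.1) (fun s => (s.1, s.2.2.1)) := by
          conv_rhs => rw [hpeq]
          conv_lhs => rw [hpeq]
          exact (quant1 l r hr1).symm
  · calc miOf q (fun s => s.1) (fun s => s.2.1) - miOf q (fun s => s.1) (fun s => s.2.2.1)
        = ent (push (push q (fun s => s.2)) (fun a => a.1))
          - ent (push (push q (fun s => s.2)) (fun a => a.2.1))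
          + ∑ i, μ i * wzG2 (ρ i) := quant2 μ ρ hρ1
      _ = ent (push (push p (fun s => s.2)) (fun a => a.1))
          - ent (push (push p (fun s => s.2)) (fun a => a.2.1))
          + ∑ u, l u * wzG2 (r u) := by rw [hmargp, hg2]
      _ = miOf p (fun s => s.1) (fun s => s.2.1) - miOf p (fun s => s.1) (fun s => s.2.2.1) := by
          conv_rhs => rw [hpeq]
          conv_lhs => rw [hpeq]
          exact (quant2 l r hr1).symm
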